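/- Let b ≥ 2 be an integer and let d ≥ 3 be a divisor of b+1. For k₁ > k₂ > ⋯ > k_r ≥ 0 and any integer i, S^{(d−1)}_{d,i}((d−1)^{k₁} + ⋯ + (d−1)^{k_r}) = S^{(b)}_{d,i}(b^{k₁} + ⋯ + b^{k_r}). -/

import Mathlib

/-- `A_b` membership: the base-`b` expansion of `n` uses only digits 0 and 1. -/
def inAset (b n : ℕ) : Prop := ∀ d ∈ Nat.digits b n, d ≤ 1

/-- `newmanS b q i N = Σ_{n ∈ A_b, 0 ≤ n < N, n ≡ i (mod q)} (-1)^{s_b(n)}`,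
where `s_b(n)` is the sum of the base-`b` digits of `n`. -/
def newmanS (b q : ℕ) (i : ℤ) (N : ℕ) : ℤ :=
  ∑ n ∈ Finset.range N,
    if (∀ d ∈ Nat.digits b n, d ≤ 1) ∧ (n : ℤ) % q = i % q
    then (-1 : ℤ) ^ (Nat.digits b n).sum else 0

lemma geom_lt' (c : ℕ) (hc : 2 ≤ c) (k : ℕ) : ∑ t ∈ Finset.range k, c ^ t < c ^ k := by
  induction k with
  | zero => simp
  | succ k ih =>
    rw [Finset.sum_range_succ, pow_succ]
    have : c ^ k * 2 ≤ c ^ k * c := Nat.mul_le_mul_left _ hc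
    omega

lemma ofDigits_le' (c : ℕ) (L : List ℕ) (hL : ∀ e ∈ L, e ≤ 1) :
    Nat.ofDigits c L ≤ ∑ t ∈ Finset.range L.length, c ^ t := by
  induction L with
  | nil => simp [Nat.ofDigits]
  | cons a L ih =>
    rw [Nat.ofDigits_cons, List.length_cons, Finset.sum_range_succ']
    have h1 : a ≤ 1 := hL a (by simp)
    have h2 : Nat.ofDigits c L ≤ ∑ t ∈ Finset.range L.length, c ^ t :=
      ih (fun e he => hL e (by simp [he]))
    have h3 : c * Nat.ofDigits c L ≤ ∑ t ∈ Finset.range L.length, c ^ (t + 1) := by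
      calc c * Nat.ofDigits c L ≤ c * ∑ t ∈ Finset.range L.length, c ^ t :=
            Nat.mul_le_mul_left _ h2
        _ = ∑ t ∈ Finset.range L.length, c ^ (t + 1) := by
            rw [Finset.mul_sum]; exact Finset.sum_congr rfl (fun t _ => by ring)
    simp only [pow_zero]
    omega

lemma inAset_lt' (c n k : ℕ) (hc : 2 ≤ c) (hA : ∀ e ∈ Nat.digits c n, e ≤ 1)
    (hn : n < c ^ (k + 1)) : n < 2 * c ^ k := by
  have hlen : (Nat.digits c n).length ≤ k + 1 := by
    by_contra h
    push_neg at h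
    have hn0 : n ≠ 0 := by
      rintro rfl; simp at h
    have h1 : c ^ (Nat.digits c n).length ≤ c * n :=
      Nat.base_pow_length_digits_le c n (by omega) hn0
    have h2 : c ^ (k + 2) ≤ c ^ (Nat.digits c n).length := Nat.pow_le_pow_right (by omega) h
    have h3 : c * n < c ^ (k + 2) := by
      calc c * n < c * c ^ (k + 1) := by
            exact mul_lt_mul_of_pos_left hn (by omega)
        _ = c ^ (k + 2) := by ring
    omega
  have h1 := ofDigits_le' c _ hA
  rw [Nat.ofDigits_digits] at h1
  have h2 : ∑ t ∈ Finset.range (Nat.digits c n).length, c ^ t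
      ≤ ∑ t ∈ Finset.range (k + 1), c ^ t :=
    Finset.sum_le_sum_of_subset (Finset.range_subset_range.mpr hlen)
  have h3 := geom_lt' c hc k
  rw [Finset.sum_range_succ] at h2
  omega

lemma digits_pow_add' (c : ℕ) (hc : 2 ≤ c) :
    ∀ k m, m < c ^ k →
      ((Nat.digits c (c ^ k + m)).sum = 1 + (Nat.digits c m).sum ∧
       ((∀ e ∈ Nat.digits c (c ^ k + m), e ≤ 1) ↔ (∀ e ∈ Nat.digits c m, e ≤ 1))) := by
  intro k
  induction k with
  | zero =>
    intro m hm
    have hm0 : m = 0 := by simpa using hm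
    subst hm0
    have h1 : 1 < c := by omega
    simp only [pow_zero, Nat.add_zero, Nat.digits_zero]
    rw [Nat.digits_def' h1 one_pos]
    simp [Nat.mod_eq_of_lt h1, Nat.div_eq_of_lt h1]
  | succ k ih =>
    intro m hm
    have hc1 : 1 < c := hc
    have hn : 0 < c ^ (k + 1) + m := by positivity
    have hdig : Nat.digits c (c ^ (k + 1) + m)
        = (c ^ (k + 1) + m) % c :: Nat.digits c ((c ^ (k + 1) + m) / c) :=
      Nat.digits_def' hc1 hn
    have hpow : c ^ (k + 1) = c * c ^ k := by ring
    have hmod : (c ^ (k + 1) + m) % c = m % c := by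
      rw [hpow, Nat.mul_add_mod]
    have hdiv : (c ^ (k + 1) + m) / c = c ^ k + m / c := by
      rw [hpow, Nat.mul_add_div (by omega)]
    have hmdiv : m / c < c ^ k := by
      apply Nat.div_lt_of_lt_mul
      calc m < c ^ (k + 1) := hm
        _ = c * c ^ k := by ring
    obtain ⟨ihs, ihA⟩ := ih (m / c) hmdiv
    have hml : m % c ≤ 1 → m % c + 1 + (Nat.digits c (m / c)).sum
        = 1 + (Nat.digits c m).sum ∧ True := by exact fun _ => ⟨by
      rcases Nat.eq_zero_or_pos m with rfl | hm0
      · simp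
      · rw [Nat.digits_def' hc1 hm0]; simp; omega, trivial⟩
    constructor
    · rw [hdig, hmod, hdiv, List.sum_cons, ihs]
      rcases Nat.eq_zero_or_pos m with rfl | hm0
      · simp
      · rw [Nat.digits_def' hc1 hm0]; simp; omega
    · rw [hdig, hmod, hdiv]
      simp only [List.mem_cons, forall_eq_or_imp]
      rw [ihA]
      rcases Nat.eq_zero_or_pos m with rfl | hm0
      · simp
      · rw [Nat.digits_def' hc1 hm0]
        simp only [List.mem_cons, forall_eq_or_imp]
    
lemma modEq_shift' (q a c i : ℤ) : (c + a) % q = i % q ↔ a % q = (i - c) % q := by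
  constructor
  · intro h
    have h' : c + a ≡ i [ZMOD q] := h
    have := h'.sub (Int.ModEq.refl c)
    exact (by simpa using this : a ≡ i - c [ZMOD q])
  · intro h
    have h' : a ≡ i - c [ZMOD q] := h
    have := (Int.ModEq.refl c).add h'
    exact (by simpa using this : c + a ≡ i [ZMOD q])

lemma newmanS_split' (c q k M : ℕ) (i : ℤ) (hc : 2 ≤ c) (hM : M ≤ c ^ k) :
    newmanS c q i (c ^ k + M) = newmanS c q i (c ^ k) - newmanS c q (i - (c : ℤ) ^ k) M := by
  unfold newmanS
  rw [Finset.sum_range_add, sub_eq_add_neg, ← Finset.sum_neg_distrib]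
  congr 1
  apply Finset.sum_congr rfl
  intro m hm
  rw [Finset.mem_range] at hm
  have hmk : m < c ^ k := lt_of_lt_of_le hm hM
  obtain ⟨hs, hA⟩ := digits_pow_add' c hc k m hmk
  have hcast : ((c ^ k + m : ℕ) : ℤ) = (c : ℤ) ^ k + (m : ℤ) := by push_cast; ring
  by_cases h : (∀ e ∈ Nat.digits c m, e ≤ 1) ∧ (m : ℤ) % q = (i - (c : ℤ) ^ k) % q
  · have hP : (∀ e ∈ Nat.digits c (c ^ k + m), e ≤ 1)
        ∧ ((c ^ k + m : ℕ) : ℤ) % q = i % q :=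
      ⟨hA.mpr h.1, by rw [hcast]; exact (modEq_shift' q m _ i).mpr h.2⟩
    rw [if_pos hP, if_pos h, hs, pow_add]
    ring
  · have hP : ¬((∀ e ∈ Nat.digits c (c ^ k + m), e ≤ 1)
        ∧ ((c ^ k + m : ℕ) : ℤ) % q = i % q) := by
      rintro ⟨h1, h2⟩
      rw [hcast] at h2
      exact h ⟨hA.mp h1, (modEq_shift' q m _ i).mp h2⟩
    rw [if_neg hP, if_neg h]
    ring

lemma newmanS_trunc' (c q k : ℕ) (i : ℤ) (hc : 2 ≤ c) :
    newmanS c q i (c ^ (k + 1)) = newmanS c q i (2 * c ^ k) := by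
  have h2 : 2 * c ^ k ≤ c ^ (k + 1) := by
    calc 2 * c ^ k ≤ c * c ^ k := Nat.mul_le_mul_right _ hc
      _ = c ^ (k + 1) := by ring
  obtain ⟨E, hE⟩ : ∃ E, c ^ (k + 1) = 2 * c ^ k + E := ⟨c ^ (k + 1) - 2 * c ^ k, by omega⟩
  rw [hE]
  unfold newmanS
  rw [Finset.sum_range_add]
  have hz : ∀ e ∈ Finset.range E,
      (if (∀ d ∈ Nat.digits c (2 * c ^ k + e), d ≤ 1)
            ∧ ((2 * c ^ k + e : ℕ) : ℤ) % q = i % q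
        then (-1 : ℤ) ^ (Nat.digits c (2 * c ^ k + e)).sum else 0) = 0 := by
    intro e he
    rw [Finset.mem_range] at he
    rw [if_neg]
    rintro ⟨hA, -⟩
    have := inAset_lt' c (2 * c ^ k + e) k hc hA (by omega)
    omega
  rw [Finset.sum_congr rfl hz]
  simp

lemma newmanS_pow_succ' (c q k : ℕ) (i : ℤ) (hc : 2 ≤ c) :
    newmanS c q i (c ^ (k + 1))
      = newmanS c q i (c ^ k) - newmanS c q (i - (c : ℤ) ^ k) (c ^ k) := by
  rw [newmanS_trunc' c q k i hc, two_mul, newmanS_split' c q k (c ^ k) i hc le_rfl]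

lemma newmanS_congr' (c q : ℕ) (i i' : ℤ) (N : ℕ) (h : i % (q : ℤ) = i' % (q : ℤ)) :
    newmanS c q i N = newmanS c q i' N := by
  unfold newmanS
  rw [h]

lemma sub_pow_mod' (q : ℕ) (c : ℤ) (hc : (q : ℤ) ∣ c + 1) (i : ℤ) (k : ℕ) :
    (i - c ^ k) % (q : ℤ) = (i - (-1) ^ k) % (q : ℤ) := by
  have h1 : c ≡ -1 [ZMOD (q : ℤ)] := by
    rw [Int.modEq_iff_dvd]
    rw [show (-1 - c) = -(c + 1) by ring]; exact hc.neg_right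
  exact (Int.ModEq.refl i).sub (h1.pow k)

lemma pow_eq' (b d : ℕ) (hb : 2 ≤ b) (hd : 3 ≤ d) (hdvd : d ∣ b + 1) :
    ∀ k (i : ℤ), newmanS (d - 1) d i ((d - 1) ^ k) = newmanS b d i (b ^ k) := by
  have hdvd1 : (d : ℤ) ∣ ((d - 1 : ℕ) : ℤ) + 1 := by
    have : ((d - 1 : ℕ) : ℤ) = (d : ℤ) - 1 := by
      rw [Nat.cast_sub (by omega)]; simp
    rw [this]; simp
  have hdvd2 : (d : ℤ) ∣ (b : ℤ) + 1 := by
    exact_mod_cast Int.natCast_dvd_natCast.mpr hdvd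
  intro k
  induction k with
  | zero => intro i; simp [newmanS]
  | succ k ih =>
    intro i
    have hd1 : 2 ≤ d - 1 := by omega
    rw [newmanS_pow_succ' _ _ _ _ hd1, newmanS_pow_succ' _ _ _ _ hb, ih i]
    congr 1
    rw [newmanS_congr' (d - 1) d _ (i - (-1) ^ k) _ (sub_pow_mod' d _ hdvd1 i k),
      newmanS_congr' b d _ (i - (-1) ^ k) _ (sub_pow_mod' d _ hdvd2 i k)]
    exact ih _

lemma sum_pow_lt' (c : ℕ) (hc : 2 ≤ c) :
    ∀ (r : ℕ) (k : Fin r → ℕ) (K : ℕ), StrictAnti k → (∀ j, k j < K) →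
      ∑ j, c ^ k j < c ^ K := by
  intro r
  induction r with
  | zero => intro k K _ _; simp; positivity
  | succ r ih =>
    intro k K hk hK
    rw [Fin.sum_univ_succ]
    have htail : StrictAnti (fun j : Fin r => k j.succ) := by
      intro a b hab
      exact hk (Fin.succ_lt_succ_iff.mpr hab)
    have h1 : ∑ j : Fin r, c ^ k j.succ < c ^ k 0 :=
      ih _ (k 0) htail (fun j => hk (Fin.succ_pos j))
    have h2 : c ^ (k 0 + 1) ≤ c ^ K := Nat.pow_le_pow_right (by omega) (hK 0)
    have h3 : c ^ k 0 * 2 ≤ c ^ k 0 * c := Nat.mul_le_mul_left _ hc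
    rw [← pow_succ] at h3
    omega

theorem newmanS_base_change (b d : ℕ) (hb : 2 ≤ b) (hd : 3 ≤ d)
    (hdvd : d ∣ (b + 1)) (r : ℕ) (k : Fin r → ℕ) (hk : StrictAnti k) (i : ℤ) :
    newmanS (d - 1) d i (∑ j : Fin r, (d - 1) ^ k j) =
      newmanS b d i (∑ j : Fin r, b ^ k j) := by
  have hdvd1 : (d : ℤ) ∣ ((d - 1 : ℕ) : ℤ) + 1 := by
    have : ((d - 1 : ℕ) : ℤ) = (d : ℤ) - 1 := by
      rw [Nat.cast_sub (by omega)]; simp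
    rw [this]; simp
  have hdvd2 : (d : ℤ) ∣ (b : ℤ) + 1 := by
    exact_mod_cast Int.natCast_dvd_natCast.mpr hdvd
  have hd1 : 2 ≤ d - 1 := by omega
  induction r generalizing i with
  | zero => simp [newmanS]
  | succ r ih =>
    rw [Fin.sum_univ_succ, Fin.sum_univ_succ]
    have htail : StrictAnti (fun j : Fin r => k j.succ) := by
      intro a b hab
      exact hk (Fin.succ_lt_succ_iff.mpr hab)
    have hlt1 : ∑ j : Fin r, (d - 1) ^ k j.succ ≤ (d - 1) ^ k 0 :=
      le_of_lt (sum_pow_lt' (d - 1) hd1 r _ (k 0) htail (fun j => hk (Fin.succ_pos j)))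
    have hlt2 : ∑ j : Fin r, b ^ k j.succ ≤ b ^ k 0 :=
      le_of_lt (sum_pow_lt' b hb r _ (k 0) htail (fun j => hk (Fin.succ_pos j)))
    rw [newmanS_split' (d - 1) d (k 0) _ i hd1 hlt1, newmanS_split' b d (k 0) _ i hb hlt2,
      pow_eq' b d hb hd hdvd (k 0) i]
    congr 1
    rw [newmanS_congr' (d - 1) d _ (i - (-1) ^ k 0) _ (sub_pow_mod' d _ hdvd1 i (k 0)),
      newmanS_congr' b d _ (i - (-1) ^ k 0) _ (sub_pow_mod' d _ hdvd2 i (k 0))]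
    exact ih _ htail _
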